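/- Fix a complete graph K, a vertex x ∈ V(K), an integer m ≥ 2, and an edge probability measure μ on K. Then the sum of μ(P) over all copies P of the path P_{m+1} (on m+1 vertices) in K with x as an endpoint satisfies: ∑ μ(P) ≤ μ̄(x)·((1−μ̄(x))/(m−1))^{m−1}, where μ(P) = ∏_{e ∈ E(P)} μ(e) and μ̄(x) = ∑_{y≠x} μ(xy). -/

import Mathlib

set_option linter.unusedSectionVars false

open Finset

namespace RootedPathBound

variable {V : Type*} [Fintype V] [DecidableEq V]

/-- `μ̄(x)`. -/
def eBar (μ : Sym2 V → ℝ) (x : V) : ℝ := ∑ y ∈ Finset.univ.erase x, μ s(x, y)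

/-- Sum of weights of injective paths with `n` edges rooted at `x`. -/
def pathSum (μ : Sym2 V → ℝ) (x : V) (n : ℕ) : ℝ :=
  ∑ f ∈ Finset.univ.filter (fun f : Fin (n + 1) → V => Function.Injective f ∧ f 0 = x),
    ∏ i : Fin n, μ s(f i.castSucc, f i.succ)

/-- Sum of weights of injective paths with `n` edges rooted at `y`, avoiding `x`. -/
def rSum (μ : Sym2 V → ℝ) (x y : V) (n : ℕ) : ℝ :=
  ∑ g ∈ Finset.univ.filter
      (fun g : Fin (n + 1) → V => (Function.Injective g ∧ g 0 = y) ∧ ∀ i, g i ≠ x),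
    ∏ i : Fin n, μ s(g i.castSucc, g i.succ)

/-- The measure with all edges at `x` deleted. -/
def nu (x : V) (μ : Sym2 V → ℝ) : Sym2 V → ℝ := fun e => if x ∈ e then 0 else μ e

lemma nu_nonneg (x : V) (μ : Sym2 V → ℝ) (hnn : ∀ e, 0 ≤ μ e) : ∀ e, 0 ≤ nu x μ e := by
  intro e; unfold nu; split <;> simp [hnn e]

lemma nu_diag (x : V) (μ : Sym2 V → ℝ) (hdiag : ∀ e : Sym2 V, e.IsDiag → μ e = 0) :
    ∀ e : Sym2 V, e.IsDiag → nu x μ e = 0 := by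
  intro e he; unfold nu; split <;> simp [hdiag e he]

lemma sum_incident (μ : Sym2 V → ℝ) (hdiag : ∀ e : Sym2 V, e.IsDiag → μ e = 0) (x : V) :
    ∑ e ∈ Finset.univ.filter (fun e : Sym2 V => x ∈ e), μ e = eBar μ x := by
  have h1 : ∑ y : V, μ s(x, y) = ∑ e ∈ Finset.univ.filter (fun e : Sym2 V => x ∈ e), μ e := by
    refine Finset.sum_bij (fun y _ => s(x, y)) ?_ ?_ ?_ ?_
    · intro y _; simp
    · intro a _ b _ h; exact (Sym2.congr_right).1 h
    · intro e he
      simp only [Finset.mem_filter, Finset.mem_univ, true_and] at he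
      exact ⟨Sym2.Mem.other' he, Finset.mem_univ _, Sym2.other_spec' he⟩
    · intro y _; rfl
  rw [← h1, ← Finset.add_sum_erase _ _ (Finset.mem_univ x), hdiag s(x, x) (by simp), zero_add]
  rfl

lemma sum_nu (μ : Sym2 V → ℝ) (hdiag : ∀ e : Sym2 V, e.IsDiag → μ e = 0) (x : V) :
    ∑ e : Sym2 V, nu x μ e = (∑ e : Sym2 V, μ e) - eBar μ x := by
  rw [← sum_incident μ hdiag x]
  rw [← Finset.sum_filter_add_sum_filter_not (Finset.univ : Finset (Sym2 V))
    (fun e : Sym2 V => x ∈ e) (nu x μ)]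
  have h1 : ∑ e ∈ Finset.univ.filter (fun e : Sym2 V => x ∈ e), nu x μ e = 0 := by
    refine Finset.sum_eq_zero fun e he => ?_
    simp only [Finset.mem_filter] at he
    simp [nu, he.2]
  have h2 : ∑ e ∈ Finset.univ.filter (fun e : Sym2 V => ¬ x ∈ e), nu x μ e
      = ∑ e ∈ Finset.univ.filter (fun e : Sym2 V => ¬ x ∈ e), μ e := by
    refine Finset.sum_congr rfl fun e he => ?_
    simp only [Finset.mem_filter] at he
    simp [nu, he.2]
  rw [h1, h2, zero_add]
  have := Finset.sum_filter_add_sum_filter_not (Finset.univ : Finset (Sym2 V))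
    (fun e : Sym2 V => x ∈ e) μ
  linarith

lemma eBar_nonneg (μ : Sym2 V → ℝ) (hnn : ∀ e, 0 ≤ μ e) (x : V) : 0 ≤ eBar μ x :=
  Finset.sum_nonneg fun y _ => hnn _

/-- The basic inequality `μ̄(x) + μ̄(y) ≤ T + μ(xy)`. -/
lemma basic (μ : Sym2 V → ℝ) (hnn : ∀ e, 0 ≤ μ e)
    (hdiag : ∀ e : Sym2 V, e.IsDiag → μ e = 0) {x y : V} (hxy : y ≠ x) :
    eBar μ x + eBar μ y ≤ (∑ e : Sym2 V, μ e) + μ s(x, y) := by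
  classical
  set Ix := Finset.univ.filter (fun e : Sym2 V => x ∈ e) with hIx
  set Iy := Finset.univ.filter (fun e : Sym2 V => y ∈ e) with hIy
  have hinter : Ix ∩ Iy = {s(x, y)} := by
    ext e
    induction e using Sym2.ind with
    | _ a b =>
      simp only [hIx, hIy, Finset.mem_inter, Finset.mem_filter, Finset.mem_univ, true_and,
        Finset.mem_singleton, Sym2.mem_iff, Sym2.eq_iff]
      constructor
      · rintro ⟨h1 | h1, h2 | h2⟩ <;> subst h1 <;> tauto
      · rintro (⟨rfl, rfl⟩ | ⟨rfl, rfl⟩) <;> tauto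
  have hunion : ∑ e ∈ Ix ∪ Iy, μ e ≤ ∑ e : Sym2 V, μ e :=
    Finset.sum_le_sum_of_subset_of_nonneg (Finset.subset_univ _) fun e _ _ => hnn e
  have hui : ∑ e ∈ Ix ∪ Iy, μ e + ∑ e ∈ Ix ∩ Iy, μ e = ∑ e ∈ Ix, μ e + ∑ e ∈ Iy, μ e :=
    Finset.sum_union_inter
  have hx' : ∑ e ∈ Ix, μ e = eBar μ x := sum_incident μ hdiag x
  have hy' : ∑ e ∈ Iy, μ e = eBar μ y := sum_incident μ hdiag y
  rw [hinter] at hui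
  simp only [Finset.sum_singleton] at hui
  linarith

lemma peel (μ : Sym2 V → ℝ) (x : V) (n : ℕ) :
    pathSum μ x (n + 1) = ∑ y ∈ Finset.univ.erase x, μ s(x, y) * rSum μ x y n := by
  have step1 : pathSum μ x (n + 1) =
      ∑ g ∈ Finset.univ.filter
          (fun g : Fin (n + 1) → V => Function.Injective g ∧ ∀ i, g i ≠ x),
        μ s(x, g 0) * ∏ i : Fin n, μ s(g i.castSucc, g i.succ) := by
    refine Finset.sum_nbij' (fun f => f ∘ Fin.succ) (fun g => Fin.cons x g) ?_ ?_ ?_ ?_ ?_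
    · intro f hf
      simp only [Finset.mem_filter, Finset.mem_univ, true_and] at hf ⊢
      refine ⟨hf.1.comp (Fin.succ_injective _), fun i hi => ?_⟩
      simp only [Function.comp_apply] at hi
      have : f i.succ = f 0 := by rw [hi, hf.2]
      exact Fin.succ_ne_zero i (hf.1 this)
    · intro g hg
      simp only [Finset.mem_filter, Finset.mem_univ, true_and] at hg ⊢
      constructor
      · rw [Fin.cons_injective_iff]
        refine ⟨?_, hg.1⟩
        rintro ⟨i, hi⟩
        exact hg.2 i hi
      · simp
    · intro f hf
      simp only [Finset.mem_filter, Finset.mem_univ, true_and] at hf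
      funext i
      rcases Fin.eq_zero_or_eq_succ i with rfl | ⟨j, rfl⟩
      · simp [hf.2]
      · simp
    · intro g hg
      funext i
      simp
    · intro f hf
      simp only [Finset.mem_filter, Finset.mem_univ, true_and] at hf
      rw [Fin.prod_univ_succ]
      have h0 : μ s(f (0 : Fin (n + 1)).castSucc, f (0 : Fin (n + 1)).succ)
          = μ s(x, (f ∘ Fin.succ) 0) := by
        simp [hf.2]
      rw [h0]; rfl
  have hmaps : ∀ g ∈ Finset.univ.filter
      (fun g : Fin (n + 1) → V => Function.Injective g ∧ ∀ i, g i ≠ x),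
      (fun g : Fin (n + 1) → V => g 0) g ∈ Finset.univ.erase x := by
    intro g hg
    simp only [Finset.mem_filter, Finset.mem_univ, true_and] at hg
    exact Finset.mem_erase.2 ⟨hg.2 0, Finset.mem_univ _⟩
  rw [step1, ← Finset.sum_fiberwise_of_maps_to hmaps
    (fun g : Fin (n + 1) → V => μ s(x, g 0) * ∏ i : Fin n, μ s(g i.castSucc, g i.succ))]
  refine Finset.sum_congr rfl fun y hy => ?_
  rw [Finset.filter_filter, rSum, Finset.mul_sum]
  refine Finset.sum_congr (by ext g; simp only [Finset.mem_filter]; tauto) fun g hg => ?_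
  simp only [Finset.mem_filter] at hg
  rw [hg.2.1.2]

lemma rSum_zero (μ : Sym2 V → ℝ) {x y : V} (hxy : y ≠ x) : rSum μ x y 0 = 1 := by
  unfold rSum
  have : Finset.univ.filter
      (fun g : Fin 1 → V => (Function.Injective g ∧ g 0 = y) ∧ ∀ i, g i ≠ x)
      = {fun _ => y} := by
    ext g
    simp only [Finset.mem_filter, Finset.mem_univ, true_and, Finset.mem_singleton]
    constructor
    · rintro ⟨⟨-, h0⟩, -⟩
      funext i
      rw [Subsingleton.elim i 0, h0]
    · rintro rfl
      exact ⟨⟨Function.injective_of_subsingleton _, rfl⟩, fun i => hxy⟩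
  rw [this]
  simp

lemma rSum_le_pathSum_nu (μ : Sym2 V → ℝ) (hnn : ∀ e, 0 ≤ μ e) (x y : V) (n : ℕ) :
    rSum μ x y n ≤ pathSum (nu x μ) y n := by
  have hstep : rSum μ x y n = ∑ g ∈ Finset.univ.filter
      (fun g : Fin (n + 1) → V => (Function.Injective g ∧ g 0 = y) ∧ ∀ i, g i ≠ x),
      ∏ i : Fin n, nu x μ s(g i.castSucc, g i.succ) := by
    refine Finset.sum_congr rfl fun g hg => ?_
    simp only [Finset.mem_filter, Finset.mem_univ, true_and] at hg
    refine Finset.prod_congr rfl fun i _ => ?_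
    have hx : ¬ x ∈ s(g i.castSucc, g i.succ) := by
      rw [Sym2.mem_iff]
      push_neg
      exact ⟨fun h => hg.2 _ h.symm, fun h => hg.2 _ h.symm⟩
    simp [nu, hx]
  rw [hstep]
  refine Finset.sum_le_sum_of_subset_of_nonneg ?_ ?_
  · intro g hg
    simp only [Finset.mem_filter, Finset.mem_univ, true_and] at hg ⊢
    exact hg.1
  · intro g _ _
    refine Finset.prod_nonneg fun i _ => ?_
    unfold nu; split
    · exact le_refl 0
    · exact hnn _

lemma pathSum_one (μ : Sym2 V → ℝ) (x : V) : pathSum μ x 1 = eBar μ x := by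
  rw [show (1 : ℕ) = 0 + 1 from rfl, peel, eBar]
  refine Finset.sum_congr rfl fun y hy => ?_
  rw [rSum_zero μ (Finset.ne_of_mem_erase hy), mul_one]

lemma eBar_nu (μ : Sym2 V → ℝ) {x y : V} (hxy : y ≠ x) :
    eBar (nu x μ) y = eBar μ y - μ s(y, x) := by
  have hx : x ∈ Finset.univ.erase y := Finset.mem_erase.2 ⟨hxy.symm.symm.symm, Finset.mem_univ _⟩
  have h1 : eBar (nu x μ) y
      = ∑ z ∈ Finset.univ.erase y, (if z = x then 0 else μ s(y, z)) := by
    unfold eBar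
    refine Finset.sum_congr rfl fun z hz => ?_
    have hz' : z ≠ y := Finset.ne_of_mem_erase hz
    by_cases hzx : z = x
    · subst hzx
      simp [nu]
    · have hxmem : ¬ x ∈ s(y, z) := by
        rw [Sym2.mem_iff]
        push_neg
        exact ⟨fun h => hxy h.symm, fun h => hzx h.symm⟩
      simp [nu, hxmem, hzx]
  rw [h1, ← Finset.add_sum_erase _ _ hx, if_pos rfl, zero_add]
  have h2 : eBar μ y = μ s(y, x) + ∑ z ∈ (Finset.univ.erase y).erase x, μ s(y, z) :=
    (Finset.add_sum_erase _ _ hx).symm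
  rw [h2]
  have h3 : ∑ z ∈ (Finset.univ.erase y).erase x, (if z = x then 0 else μ s(y, z))
      = ∑ z ∈ (Finset.univ.erase y).erase x, μ s(y, z) := by
    refine Finset.sum_congr rfl fun z hz => ?_
    rw [if_neg (Finset.ne_of_mem_erase hz)]
  rw [h3]
  ring

lemma amgm (n : ℕ) (b s : ℝ) (hb : 0 ≤ b) (hbs : b ≤ s) :
    b * ((s - b) / (n : ℝ)) ^ n ≤ (s / ((n : ℝ) + 1)) ^ (n + 1) := by
  rcases Nat.eq_zero_or_pos n with rfl | hn
  · norm_num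
    linarith
  · have hn0 : (n : ℝ) ≠ 0 := Nat.cast_ne_zero.2 hn.ne'
    have hn1 : (0 : ℝ) < (n : ℝ) + 1 := by positivity
    set c : ℝ := (s - b) / (n : ℝ) with hc
    have hc0 : 0 ≤ c := div_nonneg (by linarith) (by positivity)
    have hs : b + (n : ℝ) * c = s := by rw [hc, mul_div_assoc', mul_div_cancel_left₀ _ hn0]; ring
    have hkey : b ^ ((1 : ℝ) / ((n : ℝ) + 1)) * c ^ ((n : ℝ) / ((n : ℝ) + 1))
        ≤ (1 / ((n : ℝ) + 1)) * b + ((n : ℝ) / ((n : ℝ) + 1)) * c :=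
      Real.geom_mean_le_arith_mean2_weighted (by positivity) (by positivity) hb hc0
        (by field_simp; ring)
    have hpow : (b ^ ((1 : ℝ) / ((n : ℝ) + 1)) * c ^ ((n : ℝ) / ((n : ℝ) + 1))) ^ (n + 1)
        = b * c ^ n := by
      rw [mul_pow, ← Real.rpow_natCast (b ^ ((1 : ℝ) / ((n : ℝ) + 1))) (n + 1),
        ← Real.rpow_natCast (c ^ ((n : ℝ) / ((n : ℝ) + 1))) (n + 1),
        ← Real.rpow_mul hb, ← Real.rpow_mul hc0]
      push_cast
      rw [div_mul_cancel₀ _ hn1.ne', div_mul_cancel₀ _ hn1.ne', Real.rpow_one,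
        Real.rpow_natCast]
    calc b * c ^ n
        = (b ^ ((1 : ℝ) / ((n : ℝ) + 1)) * c ^ ((n : ℝ) / ((n : ℝ) + 1))) ^ (n + 1) := hpow.symm
      _ ≤ ((1 / ((n : ℝ) + 1)) * b + ((n : ℝ) / ((n : ℝ) + 1)) * c) ^ (n + 1) :=
          pow_le_pow_left₀ (mul_nonneg (Real.rpow_nonneg hb _) (Real.rpow_nonneg hc0 _)) hkey _
      _ = (s / ((n : ℝ) + 1)) ^ (n + 1) := by
          congr 1
          rw [← hs]
          field_simp

lemma key (n : ℕ) (hn : 1 ≤ n) :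
    ∀ (μ : Sym2 V → ℝ) (x : V), (∀ e, 0 ≤ μ e) → (∀ e : Sym2 V, e.IsDiag → μ e = 0) →
      pathSum μ x (n + 1) ≤ eBar μ x * (((∑ e : Sym2 V, μ e) - eBar μ x) / (n : ℝ)) ^ n := by
  induction n, hn using Nat.le_induction with
  | base =>
    intro μ x hnn hdiag
    rw [peel]
    have hb : ∀ y ∈ Finset.univ.erase x,
        μ s(x, y) * rSum μ x y 1 ≤ μ s(x, y) * ((∑ e : Sym2 V, μ e) - eBar μ x) := by
      intro y hy
      have hyx : y ≠ x := Finset.ne_of_mem_erase hy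
      refine mul_le_mul_of_nonneg_left ?_ (hnn _)
      calc rSum μ x y 1 ≤ pathSum (nu x μ) y 1 := rSum_le_pathSum_nu μ hnn x y 1
        _ = eBar (nu x μ) y := pathSum_one _ _
        _ = eBar μ y - μ s(y, x) := eBar_nu μ hyx
        _ ≤ (∑ e : Sym2 V, μ e) - eBar μ x := by
            have h := basic μ hnn hdiag hyx
            have hswap : μ s(y, x) = μ s(x, y) := by rw [Sym2.eq_swap]
            linarith
    calc ∑ y ∈ Finset.univ.erase x, μ s(x, y) * rSum μ x y 1
        ≤ ∑ y ∈ Finset.univ.erase x, μ s(x, y) * ((∑ e : Sym2 V, μ e) - eBar μ x) :=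
          Finset.sum_le_sum hb
      _ = eBar μ x * (((∑ e : Sym2 V, μ e) - eBar μ x) / ((1 : ℕ) : ℝ)) ^ 1 := by
          rw [← Finset.sum_mul]
          norm_num [eBar]
  | succ n hn ih =>
    intro μ x hnn hdiag
    rw [peel]
    have hnu_nn := nu_nonneg x μ hnn
    have hnu_diag := nu_diag x μ hdiag
    set sv : ℝ := (∑ e : Sym2 V, μ e) - eBar μ x with hsv
    have hb : ∀ y ∈ Finset.univ.erase x,
        μ s(x, y) * rSum μ x y (n + 1) ≤ μ s(x, y) * ((sv / ((n : ℝ) + 1)) ^ (n + 1)) := by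
      intro y hy
      have hyx : y ≠ x := Finset.ne_of_mem_erase hy
      refine mul_le_mul_of_nonneg_left ?_ (hnn _)
      have h1 : rSum μ x y (n + 1) ≤ pathSum (nu x μ) y (n + 1) :=
        rSum_le_pathSum_nu μ hnn x y (n + 1)
      have h2 := ih (nu x μ) y hnu_nn hnu_diag
      have hTnu : ∑ e : Sym2 V, nu x μ e = sv := sum_nu μ hdiag x
      have hb0 : 0 ≤ eBar (nu x μ) y := eBar_nonneg _ hnu_nn y
      have hbs : eBar (nu x μ) y ≤ sv := by
        rw [eBar_nu μ hyx]
        have h := basic μ hnn hdiag hyx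
        have hswap : μ s(y, x) = μ s(x, y) := by rw [Sym2.eq_swap]
        rw [hsv]
        linarith
      have h3 := amgm n (eBar (nu x μ) y) sv hb0 hbs
      rw [hTnu] at h2
      linarith
    calc ∑ y ∈ Finset.univ.erase x, μ s(x, y) * rSum μ x y (n + 1)
        ≤ ∑ y ∈ Finset.univ.erase x, μ s(x, y) * ((sv / ((n : ℝ) + 1)) ^ (n + 1)) :=
          Finset.sum_le_sum hb
      _ = eBar μ x * (sv / (((n + 1 : ℕ)) : ℝ)) ^ (n + 1) := by
          rw [← Finset.sum_mul]
          push_cast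
          rfl

end RootedPathBound

open Finset

/-- Rooted path bound: for an edge probability measure `μ` on a complete graph
with at least `m + 1` vertices (`m ≥ 2`) and a vertex `x`, the total `μ`-weight
of copies of the path on `m + 1` vertices having `x` as an endpoint (each such
unlabeled copy corresponding to exactly one injective tuple starting at `x`) is
at most `μ̄(x)·((1 - μ̄(x))/(m-1))^(m-1)`. -/
theorem rooted_path_bound {V : Type*} [Fintype V] [DecidableEq V]
    (m : ℕ) (hm : 2 ≤ m) (hcard : m + 1 ≤ Fintype.card V) (x : V)
    (μ : Sym2 V → ℝ) (hnn : ∀ e, 0 ≤ μ e)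
    (hdiag : ∀ e : Sym2 V, e.IsDiag → μ e = 0)
    (hsum : ∑ e : Sym2 V, μ e = 1) :
    ∑ f ∈ Finset.univ.filter (fun f : Fin (m + 1) → V => Function.Injective f ∧ f 0 = x),
        ∏ i : Fin m, μ s(f i.castSucc, f i.succ) ≤
      (∑ y ∈ Finset.univ.erase x, μ s(x, y)) *
        ((1 - ∑ y ∈ Finset.univ.erase x, μ s(x, y)) / ((m : ℝ) - 1)) ^ (m - 1) := by
  obtain ⟨n, rfl⟩ : ∃ n, m = n + 1 := ⟨m - 1, by omega⟩
  have hn : 1 ≤ n := by omega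
  have h := RootedPathBound.key n hn μ x hnn hdiag
  rw [hsum] at h
  have hcast : (((n + 1 : ℕ)) : ℝ) - 1 = (n : ℝ) := by push_cast; ring
  have hexp : n + 1 - 1 = n := by omega
  rw [hcast, hexp]
  exact h
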